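/- As a → 0⁺, a^{−d}·∫_{ℝ^d} e^{−2(V(x)−V*)/a²} dx converges to Σ_{i=1}^{m*} ∫_{ℝ^d} e^{−x^⊤ ∇²V(x_i*) x} dx; equivalently, Z_a^{−1} ∼ a^d · Σ_{i=1}^{m*} ∫_{ℝ^d} e^{−x^⊤ ∇²V(x_i*) x} dx as a → 0⁺. -/

import Mathlib

open MeasureTheory Filter

noncomputable section

abbrev Euc (d : ℕ) := EuclideanSpace ℝ (Fin d)

/-- `L¹`-Wasserstein distance between two measures on `ℝ^d`: infimum of `∫ |x−y| dπ`
over all probability couplings `π`. -/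
def W1 {d : ℕ} (μ ν : Measure (Euc d)) : ℝ :=
  sInf { r : ℝ | ∃ cpl : Measure (Euc d × Euc d), IsProbabilityMeasure cpl ∧
    cpl.map Prod.fst = μ ∧ cpl.map Prod.snd = ν ∧ r = ∫ p, dist p.1 p.2 ∂cpl }

/-- The Gibbs measure `ν_a` with density `Z_a e^{−2(V(x)−V*)/a²}`. -/
def gibbs {d : ℕ} (V : Euc d → ℝ) (Vstar a : ℝ) : Measure (Euc d) :=
  (ENNReal.ofReal (∫ x : Euc d, Real.exp (-2 * (V x - Vstar) / a ^ 2)))⁻¹ •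
    volume.withDensity (fun x => ENNReal.ofReal (Real.exp (-2 * (V x - Vstar) / a ^ 2)))

/-- `T_n = C_T n^{1+β}`. -/
def Tsched (C_T β : ℝ) (n : ℕ) : ℝ := C_T * (n : ℝ) ^ (1 + β)

/-- `a_n = A / √(log(T_n + e))`. -/
def aSeq (A C_T β : ℝ) (n : ℕ) : ℝ :=
  A / Real.sqrt (Real.log (Tsched C_T β n + Real.exp 1))

/-- Hessian quadratic form `v ↦ ∇²V(x)[v,v]`. -/
def hessQuad {d : ℕ} (V : Euc d → ℝ) (x v : Euc d) : ℝ :=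
  iteratedFDeriv ℝ 2 V x ![v, v]

/-- Determinant of the Hessian matrix `∇²V(x)`. -/
def hessDet {d : ℕ} (V : Euc d → ℝ) (x : Euc d) : ℝ :=
  (Matrix.of fun i j : Fin d =>
    iteratedFDeriv ℝ 2 V x ![EuclideanSpace.single i (1 : ℝ), EuclideanSpace.single j (1 : ℝ)]).det

/-- The limiting measure
`ν* = (Σ_j det(∇²V(x_j*))^{−1/2})^{−1} Σ_i det(∇²V(x_i*))^{−1/2} δ_{x_i*}`. -/
def nuStar {d m : ℕ} (V : Euc d → ℝ) (xs : Fin m → Euc d) : Measure (Euc d) :=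
  ∑ i : Fin m, (ENNReal.ofReal (hessDet V (xs i) ^ (-(1 : ℝ) / 2) /
      ∑ j : Fin m, hessDet V (xs j) ^ (-(1 : ℝ) / 2))) • Measure.dirac (xs i)


section AuxiliaryLemmas
open Set Metric

namespace NormAux

variable {d : ℕ}

lemma pair_eq (v : Euc d) : ![v, v] = fun _ : Fin 2 => v := by
  funext i; fin_cases i <;> rfl

lemma quad_smul (Φ : ContinuousMultilinearMap ℝ (fun _ : Fin 2 => Euc d) ℝ) (s : ℝ) (v : Euc d) :
    Φ ![s • v, s • v] = s ^ 2 * Φ ![v, v] := by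
  have h : ![s • v, s • v] = fun i : Fin 2 => s • (![v, v] i) := by
    funext i; fin_cases i <;> simp
  rw [h, Φ.map_smul_univ]
  simp [pow_two]

lemma quad_zero (Φ : ContinuousMultilinearMap ℝ (fun _ : Fin 2 => Euc d) ℝ) :
    Φ ![(0 : Euc d), 0] = 0 :=
  Φ.map_coord_zero 0 (by simp)

lemma quad_sub_le (Φ Ψ : ContinuousMultilinearMap ℝ (fun _ : Fin 2 => Euc d) ℝ) (v : Euc d) :
    |Φ ![v, v] - Ψ ![v, v]| ≤ ‖Φ - Ψ‖ * (‖v‖ * ‖v‖) := by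
  have h := (Φ - Ψ).le_opNorm ![v, v]
  simpa [Fin.prod_univ_two] using h

lemma line_hasDerivAt (x v : Euc d) (t : ℝ) :
    HasDerivAt (fun t : ℝ => x + t • v) v t := by
  simpa using ((hasDerivAt_id t).smul_const v).const_add x

lemma deriv_comp_line {V : Euc d → ℝ} (hV : ContDiff ℝ 2 V) (x v : Euc d) (t : ℝ) :
    HasDerivAt (fun t : ℝ => V (x + t • v)) (fderiv ℝ V (x + t • v) v) t :=
  ((hV.differentiable (by norm_num)) _).hasFDerivAt.comp_hasDerivAt t (line_hasDerivAt x v t)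

lemma deriv2_comp_line {V : Euc d → ℝ} (hV : ContDiff ℝ 2 V) (x v : Euc d) (t : ℝ) :
    HasDerivAt (fun t : ℝ => fderiv ℝ V (x + t • v) v)
      (iteratedFDeriv ℝ 2 V (x + t • v) ![v, v]) t := by
  have h1 : ContDiff ℝ 1 (fderiv ℝ V) := by
    have := (contDiff_succ_iff_fderiv (n := 1)).mp (by exact_mod_cast hV)
    exact this.2.2
  have h2 : HasDerivAt (fun t : ℝ => fderiv ℝ V (x + t • v))
      (fderiv ℝ (fderiv ℝ V) (x + t • v) v) t :=
    ((h1.differentiable one_ne_zero) _).hasFDerivAt.comp_hasDerivAt t (line_hasDerivAt x v t)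
  have h3 := (ContinuousLinearMap.apply ℝ ℝ v).hasFDerivAt.comp_hasDerivAt t h2
  rw [iteratedFDeriv_two_apply]
  exact h3


lemma taylor2 {V : Euc d → ℝ} (hV : ContDiff ℝ 2 V) (x v : Euc d)
    (hgrad : fderiv ℝ V x = 0) :
    ∃ t ∈ Set.Icc (0:ℝ) 1,
      V (x + v) - V x = (1 / 2) * iteratedFDeriv ℝ 2 V (x + t • v) ![v, v] := by
  set φ : ℝ → ℝ := fun t => V (x + t • v) with hφdef
  have hd1 : ∀ t, HasDerivAt φ (fderiv ℝ V (x + t • v) v) t := deriv_comp_line hV x v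
  have hderiv : deriv φ = fun t => fderiv ℝ V (x + t • v) v := funext fun t => (hd1 t).deriv
  have hd2 : ∀ t, HasDerivAt (deriv φ) (iteratedFDeriv ℝ 2 V (x + t • v) ![v, v]) t := by
    intro t; rw [hderiv]; exact deriv2_comp_line hV x v t
  have hunique : UniqueDiffOn ℝ (Set.Icc (0:ℝ) 1) := uniqueDiffOn_Icc zero_lt_one
  have hφ1 : ContDiffOn ℝ 1 φ (Set.Icc (0:ℝ) 1) := by
    have : ContDiff ℝ 1 φ := by
      apply (hV.of_le (by norm_num)).comp
      exact contDiff_const.add (contDiff_id.smul contDiff_const)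
    exact this.contDiffOn
  have hEq1 : ∀ s ∈ Set.Icc (0:ℝ) 1, iteratedDerivWithin 1 φ (Set.Icc 0 1) s = deriv φ s := by
    intro s hs
    rw [iteratedDerivWithin_one]
    exact (hd1 s).differentiableAt.derivWithin (hunique s hs)
  have hdiff' : DifferentiableOn ℝ (iteratedDerivWithin 1 φ (Set.Icc (0:ℝ) 1)) (Set.Ioo (0:ℝ) 1) := by
    have hdφ : DifferentiableOn ℝ (deriv φ) (Set.Ioo (0:ℝ) 1) :=
      fun s _ => (hd2 s).differentiableAt.differentiableWithinAt
    exact hdφ.congr fun s hs => hEq1 s (Set.mem_Icc_of_Ioo hs)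
  obtain ⟨t, ht, hT⟩ := taylor_mean_remainder_lagrange (n := 1) (x₀ := 0) (x := 1) zero_ne_one
    (by rw [Set.uIcc_of_le zero_le_one]; exact_mod_cast hφ1)
    (by rw [Set.uIcc_of_le zero_le_one, Set.uIoo_of_le zero_le_one]; exact hdiff')
  rw [Set.uIoo_of_le zero_le_one] at ht
  rw [Set.uIcc_of_le zero_le_one] at hT
  refine ⟨t, Set.mem_Icc_of_Ioo ht, ?_⟩
  have htay : taylorWithinEval φ 1 (Set.Icc (0:ℝ) 1) 0 1 = φ 0 := by
    rw [show (1:ℕ) = 0 + 1 from rfl, taylorWithinEval_succ, taylor_within_zero_eval]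
    have h0 : iteratedDerivWithin (0+1) φ (Set.Icc (0:ℝ) 1) 0 = deriv φ 0 :=
      hEq1 0 (Set.left_mem_Icc.mpr zero_le_one)
    rw [h0, hderiv]
    simp [hgrad]
  have h2w : iteratedDerivWithin 2 φ (Set.Icc (0:ℝ) 1) t
      = iteratedFDeriv ℝ 2 V (x + t • v) ![v, v] := by
    have htmem : t ∈ Set.Icc (0:ℝ) 1 := Set.mem_Icc_of_Ioo ht
    rw [iteratedDerivWithin_succ]
    rw [derivWithin_congr hEq1 (hEq1 t htmem)]
    rw [(hd2 t).differentiableAt.derivWithin (hunique t htmem)]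
    exact (hd2 t).deriv
  have hφ1v : φ 1 = V (x + v) := by simp [hφdef]
  have hφ0 : φ 0 = V x := by simp [hφdef]
  rw [htay, hφ1v, hφ0, h2w] at hT
  rw [hT]; norm_num [Nat.factorial]; ring

lemma unif_pos {V : Euc d → ℝ} (hV : ContDiff ℝ 2 V) (hd : 1 ≤ d) (x : Euc d)
    (hpos : ∀ v : Euc d, v ≠ 0 → 0 < iteratedFDeriv ℝ 2 V x ![v, v]) :
    ∃ c > 0, ∃ δ > 0, ∀ z ∈ Metric.closedBall x δ, ∀ v : Euc d,
      c * ‖v‖ ^ 2 ≤ iteratedFDeriv ℝ 2 V z ![v, v] := by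
  have : Nontrivial (Euc d) := by
    apply Module.nontrivial_of_finrank_pos (R := ℝ)
    rw [finrank_euclideanSpace_fin]; omega
  set Φ := iteratedFDeriv ℝ 2 V x with hΦ
  have hcontu : Continuous fun u : Euc d => Φ ![u, u] := by
    have h1 : Continuous fun u : Euc d => (fun _ : Fin 2 => u) :=
      continuous_pi fun _ => continuous_id
    have h2 : (fun u : Euc d => Φ ![u, u]) = fun u => Φ (fun _ : Fin 2 => u) := by
      funext u; rw [pair_eq]
    rw [h2]; exact Φ.cont.comp h1
  have hsne : (sphere (0 : Euc d) 1).Nonempty := NormedSpace.sphere_nonempty.mpr zero_le_one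
  obtain ⟨u₀, hu₀, hmin⟩ := (isCompact_sphere (0 : Euc d) 1).exists_isMinOn hsne
    hcontu.continuousOn
  have hu₀norm : ‖u₀‖ = 1 := mem_sphere_zero_iff_norm.mp hu₀
  have hu₀ne : u₀ ≠ 0 := by intro h; rw [h, norm_zero] at hu₀norm; norm_num at hu₀norm
  set c₀ := Φ ![u₀, u₀] with hc₀
  have hc₀pos : 0 < c₀ := hpos u₀ hu₀ne
  have hlow : ∀ v : Euc d, c₀ * ‖v‖ ^ 2 ≤ Φ ![v, v] := by
    intro v
    rcases eq_or_ne v 0 with rfl | hv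
    · simp [quad_zero]
    · have hvnorm : ‖v‖ ≠ 0 := norm_ne_zero_iff.mpr hv
      have huu : (‖v‖⁻¹ • v) ∈ sphere (0 : Euc d) 1 := by
        rw [mem_sphere_zero_iff_norm, norm_smul]
        simp [abs_of_nonneg (inv_nonneg.mpr (norm_nonneg v)), inv_mul_cancel₀ hvnorm]
      have hQu : Φ ![‖v‖⁻¹ • v, ‖v‖⁻¹ • v] = ‖v‖⁻¹ ^ 2 * Φ ![v, v] := quad_smul Φ _ v
      have hmu : c₀ ≤ ‖v‖⁻¹ ^ 2 * Φ ![v, v] := by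
        have h := hmin huu
        simp only [Set.mem_setOf_eq] at h
        rw [hQu] at h
        exact h
      have hpos2 : (0:ℝ) < ‖v‖ ^ 2 := by positivity
      have hmul := mul_le_mul_of_nonneg_right hmu (le_of_lt hpos2)
      have heq : ‖v‖⁻¹ ^ 2 * Φ ![v, v] * ‖v‖ ^ 2 = Φ ![v, v] := by
        field_simp
      linarith [hmul, heq.le]
  have hcQ : ContinuousAt (iteratedFDeriv ℝ 2 V) x :=
    (hV.continuous_iteratedFDeriv (le_refl 2)).continuousAt
  obtain ⟨δ, hδpos, hδ⟩ := Metric.continuousAt_iff.mp hcQ (c₀ / 2) (by positivity)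
  refine ⟨c₀ / 2, by positivity, δ / 2, by positivity, ?_⟩
  intro z hz v
  have hdist : dist (iteratedFDeriv ℝ 2 V z) Φ < c₀ / 2 := by
    apply hδ
    have : dist z x ≤ δ / 2 := mem_closedBall.mp hz
    linarith
  have hnorm : ‖iteratedFDeriv ℝ 2 V z - Φ‖ ≤ c₀ / 2 := by
    rw [← dist_eq_norm]; exact hdist.le
  have hb := quad_sub_le (iteratedFDeriv ℝ 2 V z) Φ v
  have h1 : Φ ![v, v] - iteratedFDeriv ℝ 2 V z ![v, v] ≤ (c₀ / 2) * (‖v‖ * ‖v‖) := by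
    have h2 : Φ ![v, v] - iteratedFDeriv ℝ 2 V z ![v, v]
        ≤ |iteratedFDeriv ℝ 2 V z ![v, v] - Φ ![v, v]| := by
      rw [abs_sub_comm]; exact le_abs_self _
    calc Φ ![v, v] - iteratedFDeriv ℝ 2 V z ![v, v] ≤ _ := h2
      _ ≤ ‖iteratedFDeriv ℝ 2 V z - Φ‖ * (‖v‖ * ‖v‖) := hb
      _ ≤ (c₀ / 2) * (‖v‖ * ‖v‖) := by
          apply mul_le_mul_of_nonneg_right hnorm (by positivity)
  have := hlow v
  nlinarith [sq_nonneg ‖v‖]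

lemma sublevel_compact {V : Euc d → ℝ} (hcont : Continuous V)
    (hco : Tendsto V (cocompact (Euc d)) atTop) (r : ℝ) :
    IsCompact {x : Euc d | V x ≤ r} := by
  have hev : ∀ᶠ x in cocompact (Euc d), r + 1 ≤ V x := hco.eventually (eventually_ge_atTop (r + 1))
  obtain ⟨K, hK, hKs⟩ := (hasBasis_cocompact.eventually_iff).mp hev
  apply hK.of_isClosed_subset (isClosed_le hcont continuous_const)
  intro x hx
  by_contra hxK
  have := hKs (by simpa using hxK)
  simp only [Set.mem_setOf_eq] at hx this
  linarith

lemma integrable_gauss {c : ℝ} (hc : 0 < c) :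
    Integrable (fun y : Euc d => Real.exp (-(c * ‖y‖ ^ 2))) := by
  have h := (GaussianFourier.integrable_cexp_neg_mul_sq_norm_add (V := Euc d)
      (b := (c : ℂ)) (by simpa using hc) 0 0).norm
  refine h.congr (Eventually.of_forall fun v => ?_)
  simp only [Complex.norm_exp]
  norm_num [Complex.add_re, Complex.mul_re]
  left
  rw [← Complex.ofReal_pow, Complex.ofReal_re]

lemma pow_exp_tendsto (d : ℕ) {k : ℝ} (hk : 0 < k) :
    Tendsto (fun a : ℝ => (a ^ d)⁻¹ * Real.exp (-(k / a ^ 2)))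
      (nhdsWithin 0 (Set.Ioi 0)) (nhds 0) := by
  have h1 : Tendsto (fun u : ℝ => u ^ d * Real.exp (-(k * u ^ 2))) atTop (nhds 0) := by
    have hg : Tendsto (fun u : ℝ => k⁻¹ ^ d * ((k * u) ^ d * Real.exp (-(k * u)))) atTop (nhds 0) := by
      have hku : Tendsto (fun u : ℝ => k * u) atTop atTop :=
        Tendsto.const_mul_atTop hk tendsto_id
      have := (Real.tendsto_pow_mul_exp_neg_atTop_nhds_zero d).comp hku
      simpa using this.const_mul (k⁻¹ ^ d)
    apply squeeze_zero' ?_ ?_ hg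
    · filter_upwards [eventually_ge_atTop (0:ℝ)] with u hu
      positivity
    · filter_upwards [eventually_ge_atTop (1:ℝ)] with u hu
      have h2 : k * u ≤ k * u ^ 2 := by
        nlinarith [mul_nonneg (mul_nonneg hk.le (by linarith : (0:ℝ) ≤ u)) (by linarith : (0:ℝ) ≤ u - 1)]
      have h3 : Real.exp (-(k * u ^ 2)) ≤ Real.exp (-(k * u)) := by
        apply Real.exp_le_exp.mpr; linarith
      have h4 : u ^ d * Real.exp (-(k * u ^ 2)) ≤ u ^ d * Real.exp (-(k * u)) := by
        apply mul_le_mul_of_nonneg_left h3 (by positivity)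
      have h5 : k⁻¹ ^ d * ((k * u) ^ d * Real.exp (-(k * u))) = u ^ d * Real.exp (-(k * u)) := by
        rw [mul_pow, ← mul_assoc, ← mul_assoc, ← mul_pow, inv_mul_cancel₀ hk.ne', one_pow, one_mul]
      linarith
  have h2 : Tendsto (fun a : ℝ => a⁻¹) (nhdsWithin 0 (Set.Ioi 0)) atTop := tendsto_inv_nhdsGT_zero
  have h3 := h1.comp h2
  refine h3.congr fun a => ?_
  simp only [Function.comp_apply]
  rw [inv_pow]
  congr 2
  rcases eq_or_ne a 0 with rfl | ha
  · simp
  · field_simp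

lemma integrable_shifted {V : Euc d → ℝ} (hcont : Continuous V) (hVpos : ∀ x, 0 < V x)
    {A Vstar : ℝ} (hA : 0 < A)
    (hint : Integrable (fun x : Euc d => ‖x‖ ^ 2 * Real.exp (-2 * V x / A ^ 2))) :
    Integrable (fun x : Euc d => Real.exp (-2 * (V x - Vstar) / A ^ 2)) := by
  have hbase : Integrable (fun x : Euc d => Real.exp (-2 * V x / A ^ 2)) := by
    rw [← integrableOn_univ, ← Set.union_compl_self (Metric.closedBall (0 : Euc d) 1)]
    apply MeasureTheory.IntegrableOn.union
    · exact ((Real.continuous_exp.comp (by fun_prop)).continuousOn).integrableOn_compact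
        (isCompact_closedBall 0 1)
    · have hmeas : MeasurableSet (Metric.closedBall (0 : Euc d) 1)ᶜ :=
        measurableSet_closedBall.compl
      refine Integrable.mono (hint.restrict) ((Real.continuous_exp.comp (by fun_prop)).aestronglyMeasurable) ?_
      rw [ae_restrict_iff' hmeas]
      refine Eventually.of_forall fun x hx => ?_
      have hx1 : 1 ≤ ‖x‖ := by
        simp only [Set.mem_compl_iff, Metric.mem_closedBall, dist_zero_right, not_le] at hx
        exact hx.le
      have hE : (0:ℝ) ≤ Real.exp (-2 * V x / A ^ 2) := Real.exp_nonneg _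
      rw [Real.norm_eq_abs, Real.norm_eq_abs, abs_of_nonneg hE,
        abs_of_nonneg (by positivity)]
      have h1 : (1:ℝ) ≤ ‖x‖ ^ 2 := by nlinarith
      nlinarith [mul_le_mul_of_nonneg_right h1 hE]
  have := hbase.const_mul (Real.exp (2 * Vstar / A ^ 2))
  refine this.congr (Eventually.of_forall fun x => ?_)
  show Real.exp _ * Real.exp _ = _
  rw [← Real.exp_add]
  congr 1
  field_simp
  ring

lemma integrable_param {V : Euc d → ℝ} {A Vstar : ℝ} (hA : 0 < A)
    (hcont : Continuous V) (hlow : ∀ x, Vstar ≤ V x)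
    (hbase : Integrable (fun x : Euc d => Real.exp (-2 * (V x - Vstar) / A ^ 2)))
    {a : ℝ} (ha : 0 < a) (haA : a ≤ A) :
    Integrable (fun x : Euc d => Real.exp (-2 * (V x - Vstar) / a ^ 2)) := by
  refine Integrable.mono hbase ((Real.continuous_exp.comp (by fun_prop)).aestronglyMeasurable)
    (Eventually.of_forall fun x => ?_)
  rw [Real.norm_eq_abs, Real.norm_eq_abs, abs_of_nonneg (Real.exp_nonneg _),
    abs_of_nonneg (Real.exp_nonneg _)]
  apply Real.exp_le_exp.mpr
  have hg : 0 ≤ V x - Vstar := sub_nonneg.mpr (hlow x)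
  have ha2 : (0:ℝ) < a ^ 2 := by positivity
  have hA2 : (0:ℝ) < A ^ 2 := by positivity
  rw [div_le_div_iff₀ ha2 hA2]
  nlinarith [sq_nonneg a, sq_nonneg A, mul_le_mul_of_nonneg_left (mul_self_le_mul_self ha.le haA) hg]

lemma dist_shift (x₀ v : Euc d) : dist (x₀ + v) x₀ = ‖v‖ := by
  rw [dist_eq_norm]; simp

set_option maxHeartbeats 2000000 in
lemma inner_tendsto {V : Euc d → ℝ} (hV : ContDiff ℝ 2 V) (x₀ : Euc d) {Vstar δ c : ℝ}
    (hδ : 0 < δ) (hc : 0 < c)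
    (hgrad : fderiv ℝ V x₀ = 0) (hVx₀ : V x₀ = Vstar)
    (hunif : ∀ z ∈ Metric.closedBall x₀ δ, ∀ v : Euc d,
      c * ‖v‖ ^ 2 ≤ iteratedFDeriv ℝ 2 V z ![v, v]) :
    Tendsto (fun a : ℝ => (a ^ d)⁻¹ * ∫ x in Metric.closedBall x₀ δ,
        Real.exp (-2 * (V x - Vstar) / a ^ 2))
      (nhdsWithin 0 (Set.Ioi 0))
      (nhds (∫ y : Euc d, Real.exp (-(iteratedFDeriv ℝ 2 V x₀ ![y, y])))) := by
  set F : ℝ → Euc d → ℝ := fun a y =>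
    (Metric.closedBall x₀ δ).indicator (fun x => Real.exp (-2 * (V x - Vstar) / a ^ 2))
      (x₀ + a • y) with hF
  have key : ∀ a : ℝ, 0 < a →
      (a ^ d)⁻¹ * ∫ x in Metric.closedBall x₀ δ, Real.exp (-2 * (V x - Vstar) / a ^ 2)
        = ∫ y : Euc d, F a y := by
    intro a ha
    set G : Euc d → ℝ := (Metric.closedBall x₀ δ).indicator
      (fun x => Real.exp (-2 * (V x - Vstar) / a ^ 2)) with hG
    have h1 : ∫ x in Metric.closedBall x₀ δ, Real.exp (-2 * (V x - Vstar) / a ^ 2)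
        = ∫ x : Euc d, G x := (integral_indicator measurableSet_closedBall).symm
    have h2 : ∫ y : Euc d, F a y = |((a : ℝ) ^ (Module.finrank ℝ (Euc d)))⁻¹|
        • ∫ y : Euc d, G (x₀ + y) :=
      Measure.integral_comp_smul volume (fun y => G (x₀ + y)) a
    have h3 : ∫ y : Euc d, G (x₀ + y) = ∫ x : Euc d, G x :=
      integral_add_left_eq_self (f := G) x₀
    rw [h1, h2, h3, finrank_euclideanSpace_fin]
    rw [abs_of_nonneg (by positivity), smul_eq_mul]
  have hmain : Tendsto (fun a => ∫ y : Euc d, F a y) (nhdsWithin 0 (Set.Ioi 0))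
      (nhds (∫ y : Euc d, Real.exp (-(iteratedFDeriv ℝ 2 V x₀ ![y, y])))) := by
    apply tendsto_integral_filter_of_dominated_convergence
      (bound := fun y : Euc d => Real.exp (-(c * ‖y‖ ^ 2)))
    · filter_upwards [self_mem_nhdsWithin] with a _
      apply Measurable.aestronglyMeasurable
      have hgm : Measurable ((Metric.closedBall x₀ δ).indicator
          (fun x => Real.exp (-2 * (V x - Vstar) / a ^ 2))) :=
        (Real.continuous_exp.comp
          ((continuous_const.mul (hV.continuous.sub continuous_const)).div_const _)).measurable.indicator
          measurableSet_closedBall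
      exact hgm.comp (by fun_prop)
    · filter_upwards [self_mem_nhdsWithin] with a (ha : a ∈ Set.Ioi 0)
      have ha0 : (0:ℝ) < a := ha
      refine Eventually.of_forall fun y => ?_
      rw [Real.norm_eq_abs]
      by_cases hmem : x₀ + a • y ∈ Metric.closedBall x₀ δ
      · rw [hF]
        simp only [Set.indicator_of_mem hmem]
        rw [abs_of_nonneg (Real.exp_nonneg _)]
        apply Real.exp_le_exp.mpr
        obtain ⟨t, ht, htay⟩ := taylor2 hV x₀ (a • y) hgrad
        have hξmem : x₀ + t • (a • y) ∈ Metric.closedBall x₀ δ := by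
          rw [Metric.mem_closedBall, dist_shift]
          have h1 : ‖t • a • y‖ = t * ‖a • y‖ := by
            rw [norm_smul, Real.norm_eq_abs, abs_of_nonneg ht.1]
          have h2 : ‖a • y‖ ≤ δ := by
            have := Metric.mem_closedBall.mp hmem
            rwa [dist_shift] at this
          calc ‖t • a • y‖ = t * ‖a • y‖ := h1
            _ ≤ 1 * ‖a • y‖ := by
                apply mul_le_mul_of_nonneg_right ht.2 (norm_nonneg _)
            _ ≤ δ := by rwa [one_mul]
        have hQ := hunif _ hξmem (a • y)
        have hsc : ‖a • y‖ ^ 2 = a ^ 2 * ‖y‖ ^ 2 := by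
          rw [norm_smul, Real.norm_eq_abs, abs_of_nonneg ha0.le, mul_pow]
        have hVlow : (1 / 2) * (c * (a ^ 2 * ‖y‖ ^ 2)) ≤ V (x₀ + a • y) - Vstar := by
          have h := hQ
          rw [hsc] at h
          rw [← hVx₀, htay]
          linarith
        have ha2 : (0:ℝ) < a ^ 2 := by positivity
        rw [div_le_iff₀ ha2]
        nlinarith [hVlow]
      · rw [hF]
        simp only [Set.indicator_of_notMem hmem]
        simp [Real.exp_nonneg]
    · exact integrable_gauss hc
    · refine Eventually.of_forall fun y => ?_
      have hexp : Tendsto (fun a : ℝ => -2 * (V (x₀ + a • y) - Vstar) / a ^ 2)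
          (nhdsWithin 0 (Set.Ioi 0)) (nhds (-(iteratedFDeriv ℝ 2 V x₀ ![y, y]))) := by
        rw [Metric.tendsto_nhds]
        intro ε hε
        have hcQ : ContinuousAt (iteratedFDeriv ℝ 2 V) x₀ :=
          (hV.continuous_iteratedFDeriv (le_refl 2)).continuousAt
        obtain ⟨r, hr, hrr⟩ := Metric.continuousAt_iff.mp hcQ (ε / (‖y‖ * ‖y‖ + 1))
          (by positivity)
        have hsmall : Set.Ioo (0:ℝ) (r / (‖y‖ + 1)) ∈ nhdsWithin (0:ℝ) (Set.Ioi 0) :=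
          Ioo_mem_nhdsGT_of_mem ⟨le_rfl, by positivity⟩
        filter_upwards [hsmall] with a ha
        have ha0 : 0 < a := ha.1
        obtain ⟨t, ht, htay⟩ := taylor2 hV x₀ (a • y) hgrad
        have hval : -2 * (V (x₀ + a • y) - Vstar) / a ^ 2
            = -(iteratedFDeriv ℝ 2 V (x₀ + t • (a • y)) ![y, y]) := by
          rw [← hVx₀, htay, quad_smul]
          field_simp
        rw [hval]
        have hdist : dist (x₀ + t • (a • y)) x₀ < r := by
          rw [dist_shift]
          have h1 : ‖t • a • y‖ ≤ a * ‖y‖ := by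
            rw [norm_smul, norm_smul, Real.norm_eq_abs, Real.norm_eq_abs,
              abs_of_nonneg ht.1, abs_of_nonneg ha0.le]
            calc t * (a * ‖y‖) ≤ 1 * (a * ‖y‖) := by
                  apply mul_le_mul_of_nonneg_right ht.2 (by positivity)
              _ = a * ‖y‖ := one_mul _
          have h2 : a * ‖y‖ < r := by
            calc a * ‖y‖ ≤ a * (‖y‖ + 1) := by nlinarith [ha0]
              _ < r := by
                  have := ha.2
                  rw [lt_div_iff₀ (by positivity : (0:ℝ) < ‖y‖ + 1)] at this
                  linarith
          linarith
        have hQd := hrr hdist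
        rw [dist_eq_norm] at hQd ⊢
        have hb := quad_sub_le (iteratedFDeriv ℝ 2 V (x₀ + t • (a • y)))
          (iteratedFDeriv ℝ 2 V x₀) y
        have hQd' : ‖iteratedFDeriv ℝ 2 V (x₀ + t • (a • y)) - iteratedFDeriv ℝ 2 V x₀‖
            < ε / (‖y‖ * ‖y‖ + 1) := hQd
        have hyy : (0:ℝ) ≤ ‖y‖ * ‖y‖ := by positivity
        have hstep : (ε / (‖y‖ * ‖y‖ + 1)) * (‖y‖ * ‖y‖) < ε := by
          rw [div_mul_eq_mul_div, div_lt_iff₀ (by positivity)]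
          nlinarith [hε]
        have hkey : |iteratedFDeriv ℝ 2 V (x₀ + t • (a • y)) ![y, y]
            - iteratedFDeriv ℝ 2 V x₀ ![y, y]| < ε := by
          have h2 := mul_le_mul_of_nonneg_right hQd'.le hyy
          linarith [hb, h2, hstep]
        rw [Real.norm_eq_abs, neg_sub_neg, abs_sub_comm]
        exact hkey
      have hind : ∀ᶠ a in nhdsWithin (0:ℝ) (Set.Ioi 0),
          Real.exp (-2 * (V (x₀ + a • y) - Vstar) / a ^ 2) = F a y := by
        have hs : Set.Ioo (0:ℝ) (δ / (‖y‖ + 1)) ∈ nhdsWithin (0:ℝ) (Set.Ioi 0) :=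
          Ioo_mem_nhdsGT_of_mem ⟨le_rfl, by positivity⟩
        filter_upwards [hs] with a ha
        rw [hF]
        have hmem : x₀ + a • y ∈ Metric.closedBall x₀ δ := by
          rw [Metric.mem_closedBall, dist_shift, norm_smul, Real.norm_eq_abs,
            abs_of_nonneg ha.1.le]
          calc a * ‖y‖ ≤ a * (‖y‖ + 1) := by nlinarith [ha.1]
            _ ≤ δ := by
                have := ha.2
                rw [lt_div_iff₀ (by positivity : (0:ℝ) < ‖y‖ + 1)] at this
                linarith
        simp only [Set.indicator_of_mem hmem]
      exact ((Real.continuous_exp.tendsto _).comp hexp).congr' hind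
  have heq : (fun a : ℝ => (a ^ d)⁻¹ * ∫ x in Metric.closedBall x₀ δ,
      Real.exp (-2 * (V x - Vstar) / a ^ 2)) =ᶠ[nhdsWithin (0:ℝ) (Set.Ioi 0)]
      fun a => ∫ y : Euc d, F a y := by
    filter_upwards [self_mem_nhdsWithin] with a ha
    exact key a ha
  exact hmain.congr' heq.symm

end NormAux

end AuxiliaryLemmas

open NormAux Set Metric in
/-- as `a → 0⁺`,
`a^{−d} ∫ e^{−2(V(x)−V*)/a²} dx → Σ_i ∫ e^{−xᵀ∇²V(x_i*)x} dx`. -/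
theorem normalization_equivalent {d m : ℕ} (V : Euc d → ℝ) (A C_T β Vstar : ℝ) (xs : Fin m → Euc d)
    (hd : 1 ≤ d) (hA : 0 < A) (hCT : 0 < C_T) (hβ : 0 < β)
    (hV : ContDiff ℝ 2 V) (hVpos : ∀ x, 0 < V x)
    (hVco : Tendsto V (cocompact (Euc d)) atTop)
    (hm : 1 ≤ m) (hinj : Function.Injective xs)
    (hVstar : 0 < Vstar)
    (hlow : ∀ x, Vstar ≤ V x) (hxs : ∀ i, V (xs i) = Vstar)
    (hargmin : ∀ x, V x = Vstar → ∃ i, x = xs i)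
    (hhess : ∀ i, ∀ v : Euc d, v ≠ 0 → 0 < hessQuad V (xs i) v)
    (hint : Integrable (fun x : Euc d => ‖x‖ ^ 2 * Real.exp (-2 * V x / A ^ 2)))
    :
    Tendsto (fun a : ℝ => (a ^ d)⁻¹ * ∫ x : Euc d, Real.exp (-2 * (V x - Vstar) / a ^ 2))
      (nhdsWithin 0 (Set.Ioi 0))
      (nhds (∑ i : Fin m, ∫ x : Euc d, Real.exp (-(hessQuad V (xs i) x)))) := by
  classical
  have hVc : Continuous V := hV.continuous
  have hgrad : ∀ i, fderiv ℝ V (xs i) = 0 := by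
    intro i
    have hmin : IsLocalMin V (xs i) :=
      Eventually.of_forall fun x => (hxs i).symm ▸ hlow x
    exact hmin.fderiv_eq_zero
  have hup := fun i => unif_pos hV hd (xs i) (fun v hv => hhess i v hv)
  choose c hc δ0 hδ0 hball using hup
  have hmpos : 0 < m := hm
  have : Nonempty (Fin m) := Fin.pos_iff_nonempty.mp hmpos
  have hFne : (Finset.univ : Finset (Fin m)).Nonempty := Finset.univ_nonempty
  set δ1 := Finset.univ.inf' hFne δ0 with hδ1
  have hδ1pos : 0 < δ1 := (Finset.lt_inf'_iff _).mpr fun i _ => hδ0 i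
  set P := (Finset.univ : Finset (Fin m × Fin m)).filter (fun p => p.1 ≠ p.2) with hP
  set D := if hPne : P.Nonempty then P.inf' hPne (fun p => dist (xs p.1) (xs p.2)) else 1 with hD
  have hDpos : 0 < D := by
    by_cases hPne : P.Nonempty
    · rw [hD, dif_pos hPne]
      apply (Finset.lt_inf'_iff _).mpr
      intro p hp
      have hne : p.1 ≠ p.2 := (Finset.mem_filter.mp hp).2
      exact dist_pos.mpr (fun h => hne (hinj h))
    · rw [hD, dif_neg hPne]; norm_num
  have hsep : ∀ i j, i ≠ j → D ≤ dist (xs i) (xs j) := by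
    intro i j hij
    have hmem : (i, j) ∈ P := Finset.mem_filter.mpr ⟨Finset.mem_univ _, hij⟩
    have hPne : P.Nonempty := ⟨(i, j), hmem⟩
    rw [hD, dif_pos hPne]
    exact Finset.inf'_le _ hmem
  set δ := min δ1 (D / 3) with hδdef
  have hδpos : 0 < δ := lt_min hδ1pos (by positivity)
  have hδle : ∀ i, δ ≤ δ0 i := fun i =>
    le_trans (min_le_left _ _) (Finset.inf'_le _ (Finset.mem_univ i))
  set B : Fin m → Set (Euc d) := fun i => Metric.closedBall (xs i) δ with hB
  have hdisj : Pairwise (Function.onFun Disjoint B) := by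
    intro i j hij
    apply Metric.closedBall_disjoint_closedBall
    have h1 : δ ≤ D / 3 := min_le_right _ _
    have h2 := hsep i j hij
    linarith
  set S := ⋃ i, B i with hS
  have hSmeas : MeasurableSet S := MeasurableSet.iUnion fun i => measurableSet_closedBall
  set K := {x : Euc d | V x ≤ Vstar + 1} ∩ (⋃ i, Metric.ball (xs i) δ)ᶜ with hK
  have hKcomp : IsCompact K :=
    (sublevel_compact hVc hVco (Vstar + 1)).inter_right
      (isOpen_iUnion fun i => Metric.isOpen_ball).isClosed_compl
  have hScomp_sub : Sᶜ ⊆ (⋃ i, Metric.ball (xs i) δ)ᶜ :=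
    compl_subset_compl.mpr (iUnion_mono fun i => Metric.ball_subset_closedBall)
  have hKpos : ∀ x ∈ K, 0 < V x - Vstar := by
    intro x hx
    rcases lt_or_eq_of_le (hlow x) with h | h
    · linarith
    · exfalso
      obtain ⟨i, rfl⟩ := hargmin x h.symm
      exact hx.2 (mem_iUnion.mpr ⟨i, Metric.mem_ball_self hδpos⟩)
  obtain ⟨η, hηpos, hη1, hηS⟩ : ∃ η, 0 < η ∧ η ≤ 1 ∧ ∀ x ∈ Sᶜ, η ≤ V x - Vstar := by
    by_cases hne : K.Nonempty
    · obtain ⟨x₁, hx₁K, hminK⟩ := hKcomp.exists_isMinOn hne hVc.continuousOn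
      refine ⟨min (V x₁ - Vstar) 1, lt_min (hKpos x₁ hx₁K) one_pos, min_le_right _ _, ?_⟩
      intro x hx
      by_cases hxle : V x ≤ Vstar + 1
      · have hxK : x ∈ K := ⟨hxle, hScomp_sub hx⟩
        have h2 := hminK hxK
        simp only [Set.mem_setOf_eq] at h2
        calc min (V x₁ - Vstar) 1 ≤ V x₁ - Vstar := min_le_left _ _
          _ ≤ V x - Vstar := by linarith
      · push_neg at hxle
        calc min (V x₁ - Vstar) 1 ≤ 1 := min_le_right _ _
          _ ≤ V x - Vstar := by linarith
    · refine ⟨1, one_pos, le_rfl, ?_⟩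
      intro x hx
      by_contra hcon
      push_neg at hcon
      refine hne ⟨x, ⟨?_, hScomp_sub hx⟩⟩
      simp only [Set.mem_setOf_eq]
      linarith
  have hbase : Integrable (fun x : Euc d => Real.exp (-2 * (V x - Vstar) / A ^ 2)) :=
    integrable_shifted hVc hVpos hA hint
  have hInta : ∀ a : ℝ, 0 < a → a ≤ A →
      Integrable (fun x : Euc d => Real.exp (-2 * (V x - Vstar) / a ^ 2)) :=
    fun a ha haA => integrable_param hA hVc hlow hbase ha haA
  have hsplit : ∀ᶠ a in nhdsWithin (0:ℝ) (Set.Ioi 0),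
      ((∑ i : Fin m, (a ^ d)⁻¹ * ∫ x in B i, Real.exp (-2 * (V x - Vstar) / a ^ 2))
        + (a ^ d)⁻¹ * ∫ x in Sᶜ, Real.exp (-2 * (V x - Vstar) / a ^ 2))
      = (a ^ d)⁻¹ * ∫ x : Euc d, Real.exp (-2 * (V x - Vstar) / a ^ 2) := by
    filter_upwards [Ioo_mem_nhdsGT_of_mem ⟨le_rfl, hA⟩] with a ha
    have hI := hInta a ha.1 ha.2.le
    have h1 := integral_add_compl hSmeas hI
    have h2 : ∫ x in S, Real.exp (-2 * (V x - Vstar) / a ^ 2)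
        = ∑ i : Fin m, ∫ x in B i, Real.exp (-2 * (V x - Vstar) / a ^ 2) := by
      rw [hS, integral_iUnion (fun i => measurableSet_closedBall) hdisj hI.integrableOn,
        tsum_fintype]
    rw [← h1, h2, ← Finset.mul_sum]
    ring
  have hin : ∀ i : Fin m, Tendsto
      (fun a : ℝ => (a ^ d)⁻¹ * ∫ x in B i, Real.exp (-2 * (V x - Vstar) / a ^ 2))
      (nhdsWithin 0 (Set.Ioi 0)) (nhds (∫ x : Euc d, Real.exp (-(hessQuad V (xs i) x)))) := by
    intro i
    have h := inner_tendsto hV (xs i) hδpos (hc i) (hgrad i) (hxs i)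
      (fun z hz v => hball i z (Metric.closedBall_subset_closedBall (hδle i) hz) v)
    exact h
  have hout : Tendsto
      (fun a : ℝ => (a ^ d)⁻¹ * ∫ x in Sᶜ, Real.exp (-2 * (V x - Vstar) / a ^ 2))
      (nhdsWithin 0 (Set.Ioi 0)) (nhds 0) := by
    set C := ∫ x : Euc d, Real.exp (-2 * (V x - Vstar) / A ^ 2) with hCdef
    have hC0 : 0 ≤ C := integral_nonneg fun x => Real.exp_nonneg _
    have hg0 : Tendsto (fun a : ℝ =>
        (Real.exp (2 * η / A ^ 2) * C) * ((a ^ d)⁻¹ * Real.exp (-(2 * η / a ^ 2))))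
        (nhdsWithin (0:ℝ) (Set.Ioi 0)) (nhds 0) := by
      have h := (pow_exp_tendsto d (k := 2 * η) (by positivity)).const_mul
        (Real.exp (2 * η / A ^ 2) * C)
      simpa using h
    apply squeeze_zero' ?_ ?_ hg0
    · filter_upwards [self_mem_nhdsWithin] with a (ha : a ∈ Set.Ioi 0)
      have ha0 : (0:ℝ) < a := ha
      have hnn : 0 ≤ ∫ x in Sᶜ, Real.exp (-2 * (V x - Vstar) / a ^ 2) :=
        setIntegral_nonneg hSmeas.compl fun x _ => Real.exp_nonneg _
      have : (0:ℝ) ≤ (a ^ d)⁻¹ := by positivity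
      exact mul_nonneg this hnn
    · filter_upwards [Ioo_mem_nhdsGT_of_mem ⟨le_rfl, hA⟩] with a ha
      have ha0 : 0 < a := ha.1
      have hIa := hInta a ha.1 ha.2.le
      have hpt : ∀ x ∈ Sᶜ, Real.exp (-2 * (V x - Vstar) / a ^ 2)
          ≤ (Real.exp (2 * η / A ^ 2) * Real.exp (-(2 * η / a ^ 2)))
            * Real.exp (-2 * (V x - Vstar) / A ^ 2) := by
        intro x hx
        rw [← Real.exp_add, ← Real.exp_add]
        apply Real.exp_le_exp.mpr
        have hgx : η ≤ V x - Vstar := hηS x hx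
        have h1 : (0:ℝ) < a ^ 2 := by positivity
        have h2 : (0:ℝ) < A ^ 2 := by positivity
        have hq : (A ^ 2)⁻¹ ≤ (a ^ 2)⁻¹ := by
          apply inv_anti₀ h1
          nlinarith [ha.2, ha0]
        rw [div_eq_mul_inv, div_eq_mul_inv, div_eq_mul_inv, div_eq_mul_inv]
        have hkey := mul_le_mul_of_nonneg_right
          (by linarith : 2 * η ≤ 2 * (V x - Vstar))
          (by linarith : (0:ℝ) ≤ (a ^ 2)⁻¹ - (A ^ 2)⁻¹)
        nlinarith [hkey]
      have hmono : ∫ x in Sᶜ, Real.exp (-2 * (V x - Vstar) / a ^ 2)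
          ≤ ∫ x in Sᶜ, (Real.exp (2 * η / A ^ 2) * Real.exp (-(2 * η / a ^ 2)))
            * Real.exp (-2 * (V x - Vstar) / A ^ 2) :=
        setIntegral_mono_on hIa.integrableOn
          ((hbase.const_mul _).integrableOn) hSmeas.compl hpt
      have hmono2 : ∫ x in Sᶜ, (Real.exp (2 * η / A ^ 2) * Real.exp (-(2 * η / a ^ 2)))
            * Real.exp (-2 * (V x - Vstar) / A ^ 2)
          ≤ (Real.exp (2 * η / A ^ 2) * Real.exp (-(2 * η / a ^ 2))) * C := by
        rw [integral_const_mul]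
        apply mul_le_mul_of_nonneg_left _ (by positivity)
        exact setIntegral_le_integral hbase (Eventually.of_forall fun x => Real.exp_nonneg _)
      have hfinal : ∫ x in Sᶜ, Real.exp (-2 * (V x - Vstar) / a ^ 2)
          ≤ (Real.exp (2 * η / A ^ 2) * Real.exp (-(2 * η / a ^ 2))) * C := le_trans hmono hmono2
      calc (a ^ d)⁻¹ * ∫ x in Sᶜ, Real.exp (-2 * (V x - Vstar) / a ^ 2)
          ≤ (a ^ d)⁻¹ * ((Real.exp (2 * η / A ^ 2) * Real.exp (-(2 * η / a ^ 2))) * C) := by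
            apply mul_le_mul_of_nonneg_left hfinal (by positivity)
        _ = (Real.exp (2 * η / A ^ 2) * C) * ((a ^ d)⁻¹ * Real.exp (-(2 * η / a ^ 2))) := by
            ring
  have hsum := tendsto_finset_sum (Finset.univ : Finset (Fin m)) (fun i _ => hin i)
  have htot := hsum.add hout
  rw [add_zero] at htot
  exact htot.congr' hsplit
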